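/- (Main theorem.) Fix λ ≥ 1 and let R = 2^λ, M = R/2. There exist R unitary R×R matrices A_0, ..., A_{R−1} and a vector s_0 ∈ ℂ^R such that: (i) A_k S(s) = S(s) A_k for all s ∈ ℂ^R and all 0 ≤ k < M; (ii) A_k · conj(S(s)) = S(s) · A_k for all s ∈ ℂ^R and all M ≤ k < R; and (iii) the initial matrix [A_0 s_0, ..., A_{M−1} s_0, A_M conj(s_0), ..., A_{R−1} conj(s_0)] is unitary. Hence the four-group decodable designs from extended Clifford algebras satisfy the extra conditions required of distributed differential space-time codes. -/

import Mathlib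

open Matrix

namespace DDSTC

/-- Index type `{0, ..., M-1}` with `M = 2^(λ-1)` (so `R = 2^λ = 2*M`,
and `R×R` matrices are indexed by `Idx lam ⊕ Idx lam`). -/
abbrev Idx (lam : ℕ) := Fin (2 ^ (lam - 1))

/-- Bitwise XOR `⊕` on `{0, ..., 2^(λ-1) - 1}`. -/
def fx {lam : ℕ} (i j : Idx lam) : Idx lam :=
  ⟨i.val ^^^ j.val, Nat.xor_lt_two_pow i.isLt j.isLt⟩

/-- The matrix `P_k ∈ M_M(ℂ)`, with `(P_k)_{ij} = 1` if `j = i ⊕ k` and `0` otherwise. -/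
def P {lam : ℕ} (k : Idx lam) : Matrix (Idx lam) (Idx lam) ℂ :=
  Matrix.of fun i j => if j = fx i k then 1 else 0

/-- The `R×R` design matrix `S(s) = [[C(s), -conj(D(s))], [D(s), conj(C(s))]]`
where `C(s)_{ij} = s_{i⊕j}` and `D(s)_{ij} = s_{M+(i⊕j)}`. -/
def Sdes {lam : ℕ} (s : Idx lam ⊕ Idx lam → ℂ) :
    Matrix (Idx lam ⊕ Idx lam) (Idx lam ⊕ Idx lam) ℂ :=
  Matrix.fromBlocks
    (Matrix.of fun i j => s (Sum.inl (fx i j)))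
    (-(Matrix.of fun i j => starRingEnd ℂ (s (Sum.inr (fx i j)))))
    (Matrix.of fun i j => s (Sum.inr (fx i j)))
    (Matrix.of fun i j => starRingEnd ℂ (s (Sum.inl (fx i j))))

/-- The relay matrices: `A_k = [[P_k, 0], [0, P_k]]` for `0 ≤ k < M` (index `Sum.inl k`)
and `A_{M+k} = [[0, -P_k], [P_k, 0]]` for `0 ≤ k < M` (index `Sum.inr k`). -/
def Arel {lam : ℕ} : Idx lam ⊕ Idx lam → Matrix (Idx lam ⊕ Idx lam) (Idx lam ⊕ Idx lam) ℂ
  | Sum.inl k => Matrix.fromBlocks (P k) 0 0 (P k)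
  | Sum.inr k => Matrix.fromBlocks 0 (-(P k)) (P k) 0

/-- The initial matrix `X_0 = [A_0 s_0, ..., A_{M-1} s_0, A_M conj(s_0), ..., A_{R-1} conj(s_0)]`
built from relay matrices `A` and initial vector `s_0`. -/
noncomputable def initMat {lam : ℕ}
    (A : Idx lam ⊕ Idx lam → Matrix (Idx lam ⊕ Idx lam) (Idx lam ⊕ Idx lam) ℂ)
    (s0 : Idx lam ⊕ Idx lam → ℂ) :
    Matrix (Idx lam ⊕ Idx lam) (Idx lam ⊕ Idx lam) ℂ :=
  Matrix.of fun i j =>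
    match j with
    | Sum.inl k => (A (Sum.inl k)).mulVec s0 i
    | Sum.inr k => (A (Sum.inr k)).mulVec (fun t => starRingEnd ℂ (s0 t)) i


section Aux

variable {lam : ℕ}

lemma fx_assoc (i k j : Idx lam) : fx (fx i k) j = fx i (fx j k) := by
  simp only [fx]
  ext
  simp only [Nat.xor_assoc]
  rw [Nat.xor_comm k.val j.val]

lemma fx_cancel (a k : Idx lam) : fx (fx a k) k = a := by
  simp only [fx]
  ext
  simp [Nat.xor_assoc]

lemma fx_eq_iff (j b k : Idx lam) : j = fx b k ↔ b = fx j k := by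
  constructor <;> rintro rfl <;> rw [fx_cancel]

/-- Matrices of the form `m_{ij} = f(i ⊕ j)`. -/
def Xm (f : Idx lam → ℂ) : Matrix (Idx lam) (Idx lam) ℂ :=
  Matrix.of fun i j => f (fx i j)

lemma P_mul (k : Idx lam) (M : Matrix (Idx lam) (Idx lam) ℂ) :
    P k * M = Matrix.of fun i j => M (fx i k) j := by
  ext i j
  simp [Matrix.mul_apply, P]

lemma mul_P (k : Idx lam) (M : Matrix (Idx lam) (Idx lam) ℂ) :
    M * P k = Matrix.of fun i j => M i (fx j k) := by
  ext i j
  rw [Matrix.mul_apply, Finset.sum_eq_single (fx j k)]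
  · simp [P, fx_cancel]
  · intro b _ hb
    simp only [P, Matrix.of_apply]
    rw [if_neg, mul_zero]
    intro h
    exact hb ((fx_eq_iff j b k).mp h)
  · simp

lemma P_comm (k : Idx lam) (f : Idx lam → ℂ) :
    P k * Xm f = Xm f * P k := by
  rw [P_mul, mul_P]
  ext i j
  simp [Xm, fx_assoc]

lemma P_conjTranspose (k : Idx lam) : (P k)ᴴ = P k := by
  ext i j
  simp only [Matrix.conjTranspose_apply, P, Matrix.of_apply]
  by_cases h : i = fx j k
  · rw [if_pos h, if_pos ((fx_eq_iff i j k).mp h)]; simp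
  · rw [if_neg h, if_neg fun hj => h ((fx_eq_iff j i k).mp hj)]; simp

lemma P_mul_P (k : Idx lam) : P k * P k = 1 := by
  rw [P_mul]
  ext i j
  simp [P, Matrix.one_apply, fx_cancel, eq_comm]

lemma Sdes_eq (s : Idx lam ⊕ Idx lam → ℂ) :
    Sdes s = Matrix.fromBlocks
      (Xm fun t => s (Sum.inl t))
      (-(Xm fun t => starRingEnd ℂ (s (Sum.inr t))))
      (Xm fun t => s (Sum.inr t))
      (Xm fun t => starRingEnd ℂ (s (Sum.inl t))) := rfl

lemma Sdes_map (s : Idx lam ⊕ Idx lam → ℂ) :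
    (Sdes s).map (starRingEnd ℂ) = Matrix.fromBlocks
      (Xm fun t => starRingEnd ℂ (s (Sum.inl t)))
      (-(Xm fun t => s (Sum.inr t)))
      (Xm fun t => starRingEnd ℂ (s (Sum.inr t)))
      (Xm fun t => s (Sum.inl t)) := by
  ext (i | i) (j | j) <;>
    simp [Sdes, Xm, Matrix.fromBlocks, Matrix.map_apply]

lemma fx_eq_zero_iff (a k : Idx lam) :
    fx a k = ⟨0, Nat.two_pow_pos _⟩ ↔ a = k := by
  simp [fx, Fin.ext_iff]

lemma fx_eq_zero_iff' (a k : Idx lam) :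
    fx a k = 0 ↔ a = k := by
  simp [fx, Fin.ext_iff]

end Aux

/-- main theorem: there exist `R` unitary `R×R` matrices `A_0, ..., A_{R-1}`
(indexed by `Idx lam ⊕ Idx lam`) and a vector `s_0 ∈ ℂ^R` such that:
(i) `A_k S(s) = S(s) A_k` for all `s` and all `0 ≤ k < M`;
(ii) `A_k · conj(S(s)) = S(s) · A_k` for all `s` and all `M ≤ k < R`;
(iii) the initial matrix `[A_0 s_0, ..., A_{M-1} s_0, A_M conj(s_0), ..., A_{R-1} conj(s_0)]`
is unitary. -/
theorem stmt6 (lam : ℕ) (hlam : 1 ≤ lam) :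
    ∃ (A : Idx lam ⊕ Idx lam → Matrix (Idx lam ⊕ Idx lam) (Idx lam ⊕ Idx lam) ℂ)
      (s0 : Idx lam ⊕ Idx lam → ℂ),
      (∀ j, (A j)ᴴ * A j = 1) ∧
      (∀ (s : Idx lam ⊕ Idx lam → ℂ) (k : Idx lam),
        A (Sum.inl k) * Sdes s = Sdes s * A (Sum.inl k)) ∧
      (∀ (s : Idx lam ⊕ Idx lam → ℂ) (k : Idx lam),
        A (Sum.inr k) * (Sdes s).map (starRingEnd ℂ) = Sdes s * A (Sum.inr k)) ∧
      (initMat A s0)ᴴ * initMat A s0 = 1 := by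
  refine ⟨Arel, (fun t => if t = Sum.inl ⟨0, Nat.two_pow_pos _⟩ then (1 : ℂ) else 0),
    ?_, ?_, ?_, ?_⟩
  · rintro (k | k)
    · simp [Arel, Matrix.fromBlocks_conjTranspose, Matrix.fromBlocks_multiply,
        P_conjTranspose, P_mul_P, ← Matrix.fromBlocks_one]
    · simp [Arel, Matrix.fromBlocks_conjTranspose, Matrix.fromBlocks_multiply,
        P_conjTranspose, P_mul_P, ← Matrix.fromBlocks_one]
  · intro s k
    simp only [Arel, Sdes_eq, Matrix.fromBlocks_multiply, mul_zero, zero_mul,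
      add_zero, zero_add, neg_zero, mul_neg, neg_mul, P_comm]
  · intro s k
    rw [Sdes_map, Sdes_eq]
    simp only [Arel, Matrix.fromBlocks_multiply, mul_zero, zero_mul,
      add_zero, zero_add, neg_zero, mul_neg, neg_mul, neg_neg, P_comm]
  · have h : initMat (lam := lam) Arel
        (fun t => if t = Sum.inl ⟨0, Nat.two_pow_pos _⟩ then (1 : ℂ) else 0) = 1 := by
      ext (i | i) (j | j) <;>
        simp [initMat, Arel, Matrix.mulVec, dotProduct, Fintype.sum_sum_type,
          Matrix.fromBlocks, P, Matrix.one_apply, fx_eq_zero_iff, fx_eq_zero_iff', eq_comm,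
          apply_ite (starRingEnd ℂ)]
    rw [h]
    simp
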